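/- (Semi-gradient Stackelberg gradient equals the policy gradient.) Assume μ0(s) > 0 for all s and π_θ(s,a) > 0 for all (s,a), and fix q ∈ ℝ^{S×A}. Define the actor objective J_π(θ,q) := (1−γ) μ0ᵀ Π_θ q, the semi-gradient of the critic loss ∂_q^semi J_q := −Δ(d_θ)(r − Ψ_θ q), the semi-Hessian (∂_q^semi)² J_q := Δ(d_θ) (invertible since d_θ has positive entries), and ∂_q^semi J_π := d_θ. Let M^semi ∈ ℝ^{n × (S×A)} be the Jacobian in θ of the map θ ↦ −Δ(d_θ)(r − Ψ_θ q) with q held fixed. Then g^semi := ∂_θ J_π(θ,q) − M^semi · Δ(d_θ)⁻¹ · d_θ satisfies g^semi = ∂_θ J_π(θ,q) + ∇_θ (d_θᵀ (r − Ψ_θ q)) = ∇_θ J(θ), the true policy gradient of J(θ) := d_θᵀ r. -/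

import Mathlib

open Matrix

noncomputable section

variable {S A : Type*} [Fintype S] [Fintype A] [DecidableEq S] [DecidableEq A]
  [Nonempty S] [Nonempty A]

/-- A policy: nonnegative entries, and for each state the action probabilities sum to one. -/
def IsPolicy (x : S × A → ℝ) : Prop :=
  (∀ p, 0 ≤ x p) ∧ ∀ s : S, ∑ a : A, x (s, a) = 1

/-- A row-stochastic transition matrix. -/
def IsStochasticMat (P : Matrix (S × A) S ℝ) : Prop :=
  (∀ p s, 0 ≤ P p s) ∧ ∀ p, ∑ s : S, P p s = 1

/-- A probability vector on states. -/
def IsProbVec (μ : S → ℝ) : Prop :=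
  (∀ s, 0 ≤ μ s) ∧ ∑ s : S, μ s = 1

/-- The block policy matrix `Π(x) ∈ ℝ^{S × (S×A)}`. -/
def piMat (x : S × A → ℝ) : Matrix S (S × A) ℝ :=
  Matrix.of fun s p => if p.1 = s then x p else 0

/-- The action-marginalization matrix `Ξ ∈ ℝ^{S × (S×A)}`. -/
def xiMat : Matrix S (S × A) ℝ :=
  Matrix.of fun s p => if p.1 = s then (1 : ℝ) else 0

/-- `Ψ(x) = I - γ P Π(x)`. -/
def psiMat (P : Matrix (S × A) S ℝ) (γ : ℝ) (x : S × A → ℝ) :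
    Matrix (S × A) (S × A) ℝ :=
  1 - γ • (P * piMat x)

/-- The discounted state-action occupancy `d(x) = (1-γ)(Ψ(x)ᵀ)⁻¹ Π(x)ᵀ μ0`. -/
def dOcc (P : Matrix (S × A) S ℝ) (γ : ℝ) (μ0 : S → ℝ) (x : S × A → ℝ) :
    S × A → ℝ :=
  (1 - γ) • (((psiMat P γ x)ᵀ)⁻¹ *ᵥ ((piMat x)ᵀ *ᵥ μ0))

namespace SemiGrad

attribute [local instance] Matrix.linftyOpNormedRing Matrix.linftyOpNormedAlgebra

variable {P : Matrix (S × A) S ℝ} {γ : ℝ} {μ0 : S → ℝ} {x : S × A → ℝ}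

lemma PpiMat_apply (x : S × A → ℝ) (p p' : S × A) :
    (P * piMat x) p p' = P p p'.1 * x p' := by
  simp [Matrix.mul_apply, piMat, mul_ite]

lemma PpiMat_rowsum (hP : IsStochasticMat P) (hx : IsPolicy x) (p : S × A) :
    ∑ p' : S × A, (P * piMat x) p p' = 1 := by
  simp only [PpiMat_apply]
  rw [Fintype.sum_prod_type]
  simp only [← Finset.mul_sum]
  simp only [hx.2, mul_one]
  exact hP.2 p

lemma norm_smul_PpiMat_lt_one (hP : IsStochasticMat P) (hx : IsPolicy x)
    (hγ0 : 0 ≤ γ) (hγ1 : γ < 1) : ‖γ • (P * piMat x)‖ < 1 := by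
  rw [Matrix.linfty_opNorm_def]
  rw [show ((1 : ℝ)) = ((1 : NNReal) : ℝ) by simp]
  rw [NNReal.coe_lt_coe]
  rw [Finset.sup_lt_iff (by norm_num : (⊥ : NNReal) < 1)]
  intro p _
  rw [← NNReal.coe_lt_coe]
  have hent : ∀ p' : S × A, 0 ≤ (P * piMat x) p p' := by
    intro p'; rw [PpiMat_apply]; exact mul_nonneg (hP.1 _ _) (hx.1 _)
  have : ((∑ p' : S × A, ‖(γ • (P * piMat x)) p p'‖₊ : NNReal) : ℝ)
      = ∑ p' : S × A, γ * (P * piMat x) p p' := by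
    push_cast
    refine Finset.sum_congr rfl fun p' _ => ?_
    simp only [Matrix.smul_apply, smul_eq_mul, Real.norm_eq_abs]
    exact abs_of_nonneg (mul_nonneg hγ0 (hent p'))
  rw [this, ← Finset.mul_sum, PpiMat_rowsum hP hx, mul_one]
  simpa using hγ1

lemma psi_isUnit (hP : IsStochasticMat P) (hx : IsPolicy x)
    (hγ0 : 0 ≤ γ) (hγ1 : γ < 1) : IsUnit (psiMat P γ x) :=
  isUnit_one_sub_of_norm_lt_one (norm_smul_PpiMat_lt_one hP hx hγ0 hγ1)

lemma psi_det_isUnit (hP : IsStochasticMat P) (hx : IsPolicy x)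
    (hγ0 : 0 ≤ γ) (hγ1 : γ < 1) : IsUnit (psiMat P γ x).det :=
  (Matrix.isUnit_iff_isUnit_det _).mp (psi_isUnit hP hx hγ0 hγ1)

lemma piMatT_mulVec_apply (x : S × A → ℝ) (μ0 : S → ℝ) (p : S × A) :
    ((piMat x)ᵀ *ᵥ μ0) p = x p * μ0 p.1 := by
  simp [Matrix.mulVec, dotProduct, piMat, ite_mul, Matrix.transpose_apply]

lemma pow_entry_nonneg (hP : IsStochasticMat P) (hx : ∀ p, 0 ≤ x p) (hγ0 : 0 ≤ γ) :
    ∀ (n : ℕ) (p p' : S × A), 0 ≤ ((γ • (P * piMat x)) ^ n) p p' := by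
  intro n
  induction n with
  | zero =>
    intro p p'
    simp only [pow_zero, Matrix.one_apply]
    split <;> norm_num
  | succ n ih =>
    intro p p'
    rw [pow_succ, Matrix.mul_apply]
    refine Finset.sum_nonneg fun j _ => mul_nonneg (ih p j) ?_
    simp only [Matrix.smul_apply, smul_eq_mul]
    exact mul_nonneg hγ0 (by rw [PpiMat_apply]; exact mul_nonneg (hP.1 _ _) (hx _))

lemma dOcc_apply_eq (hP : IsStochasticMat P) (hx : IsPolicy x) (hγ0 : 0 ≤ γ) (hγ1 : γ < 1)
    (μ0 : S → ℝ) (p : S × A) :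
    dOcc P γ μ0 x p
      = (1 - γ) * ∑ j : S × A, Ring.inverse (psiMat P γ x) j p * (x j * μ0 j.1) := by
  rw [dOcc, ← Matrix.transpose_nonsing_inv]
  simp only [Pi.smul_apply, smul_eq_mul]
  congr 1
  rw [Matrix.nonsing_inv_eq_ringInverse]
  have h1 : ∀ j, ((piMat x)ᵀ *ᵥ μ0) j = x j * μ0 j.1 := fun j => piMatT_mulVec_apply x μ0 j
  simp only [Matrix.mulVec, dotProduct, Matrix.transpose_apply] at h1 ⊢
  simp [h1]

lemma dOcc_pos (hP : IsStochasticMat P) (hx : IsPolicy x) (hγ0 : 0 ≤ γ) (hγ1 : γ < 1)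
    {μ0 : S → ℝ} (hxpos : ∀ p, 0 < x p) (hμpos : ∀ s, 0 < μ0 s) (p : S × A) :
    0 < dOcc P γ μ0 x p := by
  rw [dOcc_apply_eq hP hx hγ0 hγ1]
  refine mul_pos (by linarith) ?_
  set M := γ • (P * piMat x) with hM
  have hnorm := norm_smul_PpiMat_lt_one hP hx hγ0 hγ1
  let L : Matrix (S × A) (S × A) ℝ →ₗ[ℝ] ℝ :=
    { toFun := fun B => ∑ j : S × A, B j p * (x j * μ0 j.1)
      map_add' := by intro B C; simp [Matrix.add_apply, add_mul, Finset.sum_add_distrib]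
      map_smul' := by intro c B; simp [Matrix.smul_apply, Finset.mul_sum, mul_assoc] }
  have hs : HasSum (fun k : ℕ => L (M ^ k)) (L (Ring.inverse (1 - M))) := by
    have h0 : HasSum (fun k : ℕ => M ^ k) (Ring.inverse (1 - M)) :=
      hasSum_geom_series_inverse M hnorm
    exact h0.map L.toAddMonoidHom L.continuous_of_finiteDimensional
  have hterm_nonneg : ∀ k : ℕ, 0 ≤ L (M ^ k) := fun k =>
    Finset.sum_nonneg fun j _ => mul_nonneg (pow_entry_nonneg hP hx.1 hγ0 k j p)
      (mul_nonneg (hxpos j).le (hμpos j.1).le)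
  have h0lt : 0 < L (M ^ 0) := by
    have : L (M ^ 0) = x p * μ0 p.1 := by
      simp only [pow_zero, L, LinearMap.coe_mk, AddHom.coe_mk, Matrix.one_apply, ite_mul,
        one_mul, zero_mul]
      simp
    rw [this]
    exact mul_pos (hxpos p) (hμpos p.1)
  have hle : L (M ^ 0) ≤ L (Ring.inverse (1 - M)) := by
    rw [← hs.tsum_eq]
    exact Summable.le_tsum hs.summable 0 fun k _ => hterm_nonneg k
  have hpsi : psiMat P γ x = 1 - M := rfl
  rw [hpsi]
  exact lt_of_lt_of_le h0lt hle

lemma dOcc_dot_psi (hP : IsStochasticMat P) (hx : IsPolicy x) (hγ0 : 0 ≤ γ) (hγ1 : γ < 1)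
    (μ0 : S → ℝ) (q : S × A → ℝ) :
    dOcc P γ μ0 x ⬝ᵥ (psiMat P γ x *ᵥ q) = (1 - γ) * (μ0 ⬝ᵥ (piMat x *ᵥ q)) := by
  have hdetT : IsUnit ((psiMat P γ x)ᵀ).det := by
    rw [Matrix.det_transpose]; exact psi_det_isUnit hP hx hγ0 hγ1
  rw [Matrix.dotProduct_mulVec, ← Matrix.mulVec_transpose]
  rw [dOcc, Matrix.mulVec_smul, Matrix.mulVec_mulVec, Matrix.mul_nonsing_inv _ hdetT,
    Matrix.one_mulVec, smul_dotProduct, Matrix.mulVec_transpose,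
    ← Matrix.dotProduct_mulVec, smul_eq_mul]

variable {E : Type*} [NormedAddCommGroup E] [NormedSpace ℝ E]

lemma entry_diff {f : E → Matrix (S × A) (S × A) ℝ} (hf : Differentiable ℝ f) (a b : S × A) :
    Differentiable ℝ (fun t => f t a b) := by
  let L : Matrix (S × A) (S × A) ℝ →ₗ[ℝ] ℝ :=
    { toFun := fun B => B a b, map_add' := fun _ _ => rfl, map_smul' := fun _ _ => rfl }
  exact (L.toContinuousLinearMap.differentiable).comp hf

lemma psi_differentiable (P : Matrix (S × A) S ℝ) (γ : ℝ) {π : E → S × A → ℝ}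
    (hdiff : Differentiable ℝ π) :
    Differentiable ℝ (fun t => psiMat P γ (π t)) := by
  have hpi_add : ∀ x y : S × A → ℝ, piMat (x + y) = piMat x + piMat y := by
    intro x y; ext s p; by_cases h : p.1 = s <;> simp [piMat, h]
  have hpi_smul : ∀ (c : ℝ) (x : S × A → ℝ), piMat (c • x) = c • piMat x := by
    intro c x; ext s p; by_cases h : p.1 = s <;> simp [piMat, h]
  let G : (S × A → ℝ) →ₗ[ℝ] Matrix (S × A) (S × A) ℝ :=
    { toFun := fun x => γ • (P * piMat x)
      map_add' := by intro x y; rw [hpi_add, Matrix.mul_add, smul_add]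
      map_smul' := by
        intro c x
        rw [hpi_smul, RingHom.id_apply, Matrix.mul_smul, smul_comm]  }
  exact (differentiable_const (1 : Matrix (S × A) (S × A) ℝ)).sub
    ((G.toContinuousLinearMap.differentiable).comp hdiff)

lemma ringInverse_psi_differentiable {π : E → S × A → ℝ} (hP : IsStochasticMat P)
    (hγ0 : 0 ≤ γ) (hγ1 : γ < 1) (hpol : ∀ t, IsPolicy (π t)) (hdiff : Differentiable ℝ π) :
    Differentiable ℝ (fun t => Ring.inverse (psiMat P γ (π t))) :=
  (psi_differentiable P γ hdiff).inverse fun t => psi_isUnit hP (hpol t) hγ0 hγ1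

lemma dOcc_differentiable (hP : IsStochasticMat P) (hγ0 : 0 ≤ γ) (hγ1 : γ < 1)
    {π : E → S × A → ℝ} (hpol : ∀ t, IsPolicy (π t)) (hdiff : Differentiable ℝ π)
    (μ0 : S → ℝ) :
    Differentiable ℝ (fun t => dOcc P γ μ0 (π t)) := by
  have hinv := ringInverse_psi_differentiable hP hγ0 hγ1 hpol hdiff
  have hπc : ∀ p : S × A, Differentiable ℝ (fun t => π t p) :=
    fun p => differentiable_pi.mp hdiff p
  rw [show (fun t => dOcc P γ μ0 (π t))
      = fun t p => (1 - γ) * ∑ j : S × A,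
          Ring.inverse (psiMat P γ (π t)) j p * (π t j * μ0 j.1) from
    funext fun t => funext fun p => dOcc_apply_eq hP (hpol t) hγ0 hγ1 μ0 p]
  refine differentiable_pi.mpr fun p => Differentiable.const_mul ?_ _
  exact Differentiable.fun_sum fun j _ => (entry_diff hinv j p).mul ((hπc j).mul_const _)

lemma psiMulVec_differentiable (P : Matrix (S × A) S ℝ) (γ : ℝ) {π : E → S × A → ℝ}
    (hdiff : Differentiable ℝ π) (q : S × A → ℝ) :
    Differentiable ℝ (fun t => psiMat P γ (π t) *ᵥ q) := by
  have hΨ := psi_differentiable P γ hdiff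
  refine differentiable_pi.mpr fun p => ?_
  have h : (fun t => (psiMat P γ (π t) *ᵥ q) p)
      = fun t => ∑ j : S × A, psiMat P γ (π t) p j * q j := rfl
  rw [h]
  exact Differentiable.fun_sum fun j _ => (entry_diff hΨ p j).mul_const _

lemma Jpi_differentiable (γ : ℝ) {π : E → S × A → ℝ} (hdiff : Differentiable ℝ π)
    (μ0 : S → ℝ) (q : S × A → ℝ) :
    Differentiable ℝ (fun t => (1 - γ) * (μ0 ⬝ᵥ (piMat (π t) *ᵥ q))) := by
  have hπc : ∀ p : S × A, Differentiable ℝ (fun t => π t p) :=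
    fun p => differentiable_pi.mp hdiff p
  refine Differentiable.const_mul ?_ _
  have h : (fun t => μ0 ⬝ᵥ (piMat (π t) *ᵥ q))
      = fun t => ∑ s : S, μ0 s * ∑ j : S × A, (if j.1 = s then π t j else 0) * q j := rfl
  rw [h]
  refine Differentiable.fun_sum fun s _ => Differentiable.const_mul ?_ _
  refine Differentiable.fun_sum fun j _ => ?_
  by_cases hj : j.1 = s
  · simp only [if_pos hj]; exact (hπc j).mul_const _
  · simp only [if_neg hj, zero_mul]; exact differentiable_const 0

lemma dotProd_differentiable {f g : E → S × A → ℝ} (hf : Differentiable ℝ f)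
    (hg : Differentiable ℝ g) : Differentiable ℝ (fun t => f t ⬝ᵥ g t) := by
  have h : (fun t => f t ⬝ᵥ g t) = fun t => ∑ p : S × A, f t p * g t p := rfl
  rw [h]
  exact Differentiable.fun_sum fun p _ =>
    (differentiable_pi.mp hf p).mul (differentiable_pi.mp hg p)

end SemiGrad



/-- semi-gradient Stackelberg gradient equals the policy gradient: with
full-support `μ0` and `π_θ`, the semi-gradient Stackelberg gradient
`g^semi = ∂_θ J_π - M^semi ⬝ Δ(d_θ)⁻¹ ⬝ d_θ` (with `M^semi` the Jacobian in `θ` of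
`θ ↦ -Δ(d_θ)(r - Ψ_θ q)`) equals `∂_θ J_π + ∇_θ(d_θᵀ(r - Ψ_θ q))`, the true policy
gradient `∇_θ J`. -/
theorem semi_stackelberg_gradient_is_policy_gradient
    (P : Matrix (S × A) S ℝ) (hP : IsStochasticMat P)
    (γ : ℝ) (hγ0 : 0 ≤ γ) (hγ1 : γ < 1)
    (r : S × A → ℝ) (μ0 : S → ℝ) (hμ0 : IsProbVec μ0)
    {n : ℕ} (π : (Fin n → ℝ) → S × A → ℝ)
    (hpol : ∀ θ, IsPolicy (π θ)) (hdiff : Differentiable ℝ π)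
    (θ : Fin n → ℝ) (hμ0pos : ∀ s : S, 0 < μ0 s) (hπpos : ∀ p : S × A, 0 < π θ p)
    (q : S × A → ℝ) :
    ∀ i : Fin n,
      (fderiv ℝ (fun t => (1 - γ) * (μ0 ⬝ᵥ (piMat (π t) *ᵥ q))) θ (Pi.single i 1)
        - ((Matrix.of fun j p' =>
              fderiv ℝ
                (fun t => -(Matrix.diagonal (dOcc P γ μ0 (π t)) *ᵥ (r - psiMat P γ (π t) *ᵥ q)))
                θ (Pi.single j 1) p')
            *ᵥ ((Matrix.diagonal (dOcc P γ μ0 (π θ)))⁻¹ *ᵥ dOcc P γ μ0 (π θ))) i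
        = fderiv ℝ (fun t => (1 - γ) * (μ0 ⬝ᵥ (piMat (π t) *ᵥ q))) θ (Pi.single i 1)
          + fderiv ℝ (fun t => dOcc P γ μ0 (π t) ⬝ᵥ (r - psiMat P γ (π t) *ᵥ q)) θ
              (Pi.single i 1)) ∧
      (fderiv ℝ (fun t => (1 - γ) * (μ0 ⬝ᵥ (piMat (π t) *ᵥ q))) θ (Pi.single i 1)
        - ((Matrix.of fun j p' =>
              fderiv ℝ
                (fun t => -(Matrix.diagonal (dOcc P γ μ0 (π t)) *ᵥ (r - psiMat P γ (π t) *ᵥ q)))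
                θ (Pi.single j 1) p')
            *ᵥ ((Matrix.diagonal (dOcc P γ μ0 (π θ)))⁻¹ *ᵥ dOcc P γ μ0 (π θ))) i
        = fderiv ℝ (fun t => dOcc P γ μ0 (π t) ⬝ᵥ r) θ (Pi.single i 1)) := by

  intro i
  have hpolθ := hpol θ
  have hdpos : ∀ p, 0 < dOcc P γ μ0 (π θ) p :=
    fun p => SemiGrad.dOcc_pos hP hpolθ hγ0 hγ1 hπpos hμ0pos p
  have hdiaginv : (Matrix.diagonal (dOcc P γ μ0 (π θ)))⁻¹
      = Matrix.diagonal (fun p => (dOcc P γ μ0 (π θ) p)⁻¹) := by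
    apply Matrix.inv_eq_right_inv
    rw [Matrix.diagonal_mul_diagonal]
    have h1 : (fun p => dOcc P γ μ0 (π θ) p * (dOcc P γ μ0 (π θ) p)⁻¹) = fun _ => (1 : ℝ) :=
      funext fun p => mul_inv_cancel₀ (hdpos p).ne'
    rw [h1]
    exact Matrix.diagonal_one
  have hw : ((Matrix.diagonal (dOcc P γ μ0 (π θ)))⁻¹ *ᵥ dOcc P γ μ0 (π θ)) = fun _ => (1 : ℝ) := by
    funext p
    rw [hdiaginv, Matrix.mulVec_diagonal]
    exact inv_mul_cancel₀ (hdpos p).ne'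
  have hf : Differentiable ℝ (fun t => dOcc P γ μ0 (π t)) :=
    SemiGrad.dOcc_differentiable hP hγ0 hγ1 hpol hdiff μ0
  have hgdiff : Differentiable ℝ (fun t => r - psiMat P γ (π t) *ᵥ q) :=
    (differentiable_const r).sub (SemiGrad.psiMulVec_differentiable P γ hdiff q)
  have hdot : Differentiable ℝ (fun t => dOcc P γ μ0 (π t) ⬝ᵥ (r - psiMat P γ (π t) *ᵥ q)) :=
    SemiGrad.dotProd_differentiable hf hgdiff
  have hdotr : Differentiable ℝ (fun t => dOcc P γ μ0 (π t) ⬝ᵥ r) :=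
    SemiGrad.dotProd_differentiable hf (differentiable_const r)
  have hJ : Differentiable ℝ (fun t => (1 - γ) * (μ0 ⬝ᵥ (piMat (π t) *ᵥ q))) :=
    SemiGrad.Jpi_differentiable γ hdiff μ0 q
  set F : (Fin n → ℝ) → S × A → ℝ :=
    fun t => -(Matrix.diagonal (dOcc P γ μ0 (π t)) *ᵥ (r - psiMat P γ (π t) *ᵥ q)) with hF
  have hFdiff : Differentiable ℝ F := by
    refine Differentiable.neg ?_
    refine differentiable_pi.mpr fun p => ?_
    have h : (fun t => (Matrix.diagonal (dOcc P γ μ0 (π t)) *ᵥ (r - psiMat P γ (π t) *ᵥ q)) p)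
        = fun t => dOcc P γ μ0 (π t) p * (r - psiMat P γ (π t) *ᵥ q) p := by
      funext t; rw [Matrix.mulVec_diagonal]
    rw [h]
    exact (differentiable_pi.mp hf p).mul (differentiable_pi.mp hgdiff p)
  -- sum of components of the derivative
  let Lsum : (S × A → ℝ) →L[ℝ] ℝ :=
    LinearMap.toContinuousLinearMap
      { toFun := fun v => ∑ p' : S × A, v p'
        map_add' := by intro v w; simp [Finset.sum_add_distrib]
        map_smul' := by intro c v; simp [Finset.mul_sum] }
  have hcomp : fderiv ℝ (fun t => Lsum (F t)) θ = Lsum.comp (fderiv ℝ F θ) := by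
    have h := fderiv_comp (𝕜 := ℝ) θ (Lsum.differentiableAt) (hFdiff.differentiableAt)
    rw [Lsum.fderiv] at h
    exact h
  have hsum : ∀ u : Fin n → ℝ,
      ∑ p' : S × A, fderiv ℝ F θ u p' = fderiv ℝ (fun t => ∑ p' : S × A, F t p') θ u := by
    intro u
    have h2 : (fun t => ∑ p' : S × A, F t p') = fun t => Lsum (F t) := rfl
    rw [h2, hcomp]
    rfl
  have hFsum : (fun t => ∑ p' : S × A, F t p')
      = fun t => -(dOcc P γ μ0 (π t) ⬝ᵥ (r - psiMat P γ (π t) *ᵥ q)) := by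
    funext t
    simp only [hF, Pi.neg_apply, Matrix.mulVec_diagonal, Finset.sum_neg_distrib]
    rfl
  have hterm2 : ((Matrix.of fun j p' => fderiv ℝ F θ (Pi.single j 1) p') *ᵥ
        ((Matrix.diagonal (dOcc P γ μ0 (π θ)))⁻¹ *ᵥ dOcc P γ μ0 (π θ))) i
      = - fderiv ℝ (fun t => dOcc P γ μ0 (π t) ⬝ᵥ (r - psiMat P γ (π t) *ᵥ q)) θ
          (Pi.single i 1) := by
    rw [hw]
    have h3 : ((Matrix.of fun j p' => fderiv ℝ F θ (Pi.single j 1) p') *ᵥ fun _ => (1 : ℝ)) i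
        = ∑ p' : S × A, fderiv ℝ F θ (Pi.single i 1) p' := by
      simp [Matrix.mulVec, dotProduct]
    rw [h3, hsum (Pi.single i 1), hFsum, fderiv_fun_neg]
    rfl
  have hsplit : fderiv ℝ (fun t => dOcc P γ μ0 (π t) ⬝ᵥ (r - psiMat P γ (π t) *ᵥ q)) θ
      = fderiv ℝ (fun t => dOcc P γ μ0 (π t) ⬝ᵥ r) θ
        - fderiv ℝ (fun t => (1 - γ) * (μ0 ⬝ᵥ (piMat (π t) *ᵥ q))) θ := by
    have h4 : (fun t => dOcc P γ μ0 (π t) ⬝ᵥ (r - psiMat P γ (π t) *ᵥ q))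
        = fun t => (dOcc P γ μ0 (π t) ⬝ᵥ r) - ((1 - γ) * (μ0 ⬝ᵥ (piMat (π t) *ᵥ q))) := by
      funext t
      rw [dotProduct_sub, SemiGrad.dOcc_dot_psi hP (hpol t) hγ0 hγ1 μ0 q]
    rw [h4]
    exact fderiv_sub (hdotr.differentiableAt) (hJ.differentiableAt)
  constructor
  · rw [hterm2]; ring
  · rw [hterm2, sub_neg_eq_add, hsplit]
    simp only [ContinuousLinearMap.sub_apply]
    ring
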